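/- No sound, computably axiomatized formal theory T can prove that a program p is elegant if |p| exceeds the complexity of T plus a fixed constant c; hence T proves elegance for at most finitely many programs. -/

import Mathlib

/-- Programs and outputs are finite bit strings. -/
abbrev Str := List Bool

/-- A computer is a partial computable function from bit strings to bit strings.
A universal computer can simulate any partial computable function via a fixed prefix. -/
def Univ (U : Str →. Str) : Prop :=
  Partrec U ∧ ∀ F : Str →. Str, Partrec F → ∃ e : Str, ∀ p : Str, U (e ++ p) = F p

/-- A program `p` is elegant (for `U`) if it halts and no strictly shorter program
produces the same output. -/
def Elegant (U : Str →. Str) (p : Str) : Prop :=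
  ∃ x : Str, x ∈ U p ∧ ∀ q : Str, q.length < p.length → x ∉ U q

/-- Kolmogorov complexity of `x` relative to `U`: the length of a shortest program for `x`. -/
noncomputable def Kc (U : Str →. Str) (x : Str) : ℕ :=
  sInf { n : ℕ | ∃ p : Str, p.length = n ∧ x ∈ U p }

/-- The domain of `U` is prefix-free. -/
def PrefixFreeDom (U : Str →. Str) : Prop :=
  ∀ p q : Str, (U p).Dom → (U q).Dom → p <+: q → p = q

/-- A universal prefix-free machine. -/
def UnivPF (U : Str →. Str) : Prop :=
  Partrec U ∧ PrefixFreeDom U ∧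
    ∀ F : Str →. Str, Partrec F → PrefixFreeDom F →
      ∃ e : Str, ∀ p : Str, U (e ++ p) = F p

open Classical in
/-- The halting probability `Ω = Σ_{U(p)↓} 2^(-|p|)`. -/
noncomputable def Omega (U : Str →. Str) : ℝ :=
  ∑' p : Str, if (U p).Dom then ((1 : ℝ) / 2) ^ p.length else 0

/-- The `n`-th bit (0-indexed) of the binary expansion of a real `α`. -/
noncomputable def nthBit (α : ℝ) (n : ℕ) : Bool :=
  decide (⌊α * 2 ^ (n + 1)⌋ % 2 = 1)

/-- The string of the first `n` binary digits of `α`. -/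
noncomputable def bitsOf (α : ℝ) (n : ℕ) : Str :=
  (List.range n).map (nthBit α)

/-- An injective encoding of a pair (string, number) as a bit string,
used to express the sentence `K(x) > n`. -/
def encPair (x : Str) (n : ℕ) : Str :=
  (x.flatMap fun b => [b, b]) ++ [true, false] ++ List.replicate n true

/-- An injective encoding of the sentence `the i-th bit of Ω is b`. -/
def encBit (i : ℕ) (b : Bool) : Str :=
  List.replicate i true ++ [false, b]

/-- A set of pairs is computably enumerable. -/
def CE (S : Set (Str × ℕ)) : Prop :=
  ∃ f : ℕ → Option (Str × ℕ), Computable f ∧ S = { a | ∃ k, f k = some a }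

/-- A set of strings is computably enumerable. -/
def CEStr (S : Set Str) : Prop :=
  ∃ f : ℕ → Option Str, Computable f ∧ S = { a | ∃ k, f k = some a }

open Nat.Partrec (Code)
open Nat.Partrec.Code
def idxF (s : Str) : ℕ := List.idxOf false s
def tOf (s : Str) : Str := List.tail^[idxF s + 1] s
def thr (s : Str) : ℕ := (tOf s).length + idxF s * idxF s
def hAux (c : Code) (s : Str) (k : ℕ) : Option Str :=
  (Encodable.decode (α := Str) k.unpair.1).bind fun q =>
    (Nat.Partrec.Code.evaln k.unpair.2 c (Encodable.encode (tOf s ++ q))).bind fun r =>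
      (Encodable.decode (α := Str) r).bind fun p =>
        if thr s < p.length then some p else none

lemma idxF_prim : Primrec idxF :=
  Primrec.list_idxOf.comp (Primrec.const false) Primrec.id

lemma tOf_prim : Primrec tOf :=
  Primrec.nat_iterate (Primrec.succ.comp idxF_prim) Primrec.id
    ((Primrec.list_tail.comp Primrec.snd).to₂)

lemma thr_prim : Primrec thr :=
  Primrec.nat_add.comp (Primrec.list_length.comp tOf_prim)
    (Primrec.nat_mul.comp idxF_prim idxF_prim)

lemma hAux_prim (c : Code) : Primrec₂ (hAux c) := by
  have Tif : Primrec fun (x : (((Str × ℕ) × Str) × ℕ) × Str) =>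
      if thr x.1.1.1.1 < x.2.length then some x.2 else none :=
    Primrec.ite
      (Primrec.nat_lt.comp
        (thr_prim.comp (Primrec.fst.comp (Primrec.fst.comp (Primrec.fst.comp Primrec.fst))))
        (Primrec.list_length.comp Primrec.snd))
      (Primrec.option_some.comp Primrec.snd) (Primrec.const none)
  have T3 : Primrec fun (x : ((Str × ℕ) × Str) × ℕ) =>
      (Encodable.decode (α := Str) x.2).bind fun p =>
        if thr x.1.1.1 < p.length then some p else none :=
    Primrec.option_bind (Primrec.decode.comp Primrec.snd) Tif.to₂
  have T2 : Primrec fun (x : (Str × ℕ) × Str) =>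
      (Nat.Partrec.Code.evaln x.1.2.unpair.2 c (Encodable.encode (tOf x.1.1 ++ x.2))).bind
        fun r => (Encodable.decode (α := Str) r).bind fun p =>
          if thr x.1.1 < p.length then some p else none :=
    Primrec.option_bind
      (Nat.Partrec.Code.primrec_evaln.comp
        (((Primrec.snd.comp (Primrec.unpair.comp (Primrec.snd.comp Primrec.fst))).pair
          (Primrec.const c)).pair
          (Primrec.encode.comp (Primrec.list_append.comp
            (tOf_prim.comp (Primrec.fst.comp Primrec.fst)) Primrec.snd)))) T3.to₂
  have T1 : Primrec fun (x : Str × ℕ) =>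
      (Encodable.decode (α := Str) x.2.unpair.1).bind fun q =>
        (Nat.Partrec.Code.evaln x.2.unpair.2 c (Encodable.encode (tOf x.1 ++ q))).bind
          fun r => (Encodable.decode (α := Str) r).bind fun p =>
            if thr x.1 < p.length then some p else none :=
    Primrec.option_bind
      (Primrec.decode.comp (Primrec.fst.comp (Primrec.unpair.comp Primrec.snd))) T2.to₂
  exact T1.to₂

lemma idxF_repl (m : ℕ) (t : Str) :
    idxF (List.replicate m true ++ false :: t) = m := by
  induction m with
  | zero => simp [idxF, List.idxOf, List.findIdx_cons]
  | succ n ih =>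
    rw [show List.replicate (n+1) true ++ false :: t
        = true :: (List.replicate n true ++ false :: t) by simp [List.replicate_succ]]
    simp only [idxF, List.idxOf] at ih ⊢
    simp [List.findIdx_cons] at ih ⊢
    omega

lemma tail_iter_repl (m : ℕ) (t : Str) :
    List.tail^[m + 1] (List.replicate m true ++ false :: t) = t := by
  induction m with
  | zero => simp
  | succ n ih =>
    rw [List.replicate_succ, List.cons_append, Function.iterate_succ_apply]
    simpa using ih

lemma tOf_repl (m : ℕ) (t : Str) :
    tOf (List.replicate m true ++ false :: t) = t := by
  rw [tOf, idxF_repl, tail_iter_repl]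

lemma thr_repl (m : ℕ) (t : Str) :
    thr (List.replicate m true ++ false :: t) = t.length + m * m := by
  rw [thr, tOf_repl, idxF_repl]

/-- No sound theory `T` (theorems enumerated by a program `t`) can prove that a program
`p` is elegant when `|p| > |t| + c`; hence `T` proves elegance of only finitely many
programs.  `T` proves `p` elegant iff `p` appears among the outputs `U (t ++ q)`. -/
theorem stmt6 (U : Str →. Str) (hU : Univ U) :
    ∃ c : ℕ, ∀ t : Str,
      (∀ p : Str, (∃ q : Str, p ∈ U (t ++ q)) → Elegant U p) →
      (∀ p : Str, (∃ q : Str, p ∈ U (t ++ q)) → p.length ≤ t.length + c) ∧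
        { p : Str | ∃ q : Str, p ∈ U (t ++ q) }.Finite := by
  obtain ⟨hUp, hUuniv⟩ := hU
  obtain ⟨cU, hcU⟩ := Nat.Partrec.Code.exists_code.1 hUp
  have hEval : ∀ a : Str, Nat.Partrec.Code.eval cU (Encodable.encode a)
      = Part.map Encodable.encode (U a) := by
    intro a
    rw [hcU]
    simp [Encodable.encodek]
  have hFpr : Partrec (fun s => (Nat.rfindOpt (hAux cU s)).bind U : Str →. Str) :=
    Partrec.bind (Partrec.rfindOpt (hAux_prim cU).to_comp)
      ((hUp.comp Computable.snd).to₂)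
  obtain ⟨e, he⟩ := hUuniv _ hFpr
  set m := e.length + 2 with hm
  refine ⟨m * m, fun t hsound => ?_⟩
  set s : Str := List.replicate m true ++ false :: t with hs
  have hlen_s : s.length = m + 1 + t.length := by simp [hs]; omega
  have htOf : tOf s = t := tOf_repl m t
  have hthr : thr s = t.length + m * m := thr_repl m t
  have hbound : ∀ p : Str, (∃ q, p ∈ U (t ++ q)) → p.length ≤ t.length + m * m := by
    rintro p ⟨q, hpq⟩
    by_contra hlong
    push_neg at hlong
    have hmem : Encodable.encode p ∈ Nat.Partrec.Code.eval cU (Encodable.encode (t ++ q)) := by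
      rw [hEval]; exact Part.mem_map _ hpq
    obtain ⟨k0, hk0⟩ := Nat.Partrec.Code.evaln_complete.1 hmem
    have hk0' : Nat.Partrec.Code.evaln k0 cU (Encodable.encode (t ++ q))
        = some (Encodable.encode p) := hk0
    have hwitness : hAux cU s (Nat.pair (Encodable.encode q) k0) = some p := by
      simp [hAux, Nat.unpair_pair, Encodable.encodek, htOf, hk0', hthr, hlong]
    have hdom : (Nat.rfindOpt (hAux cU s)).Dom := Nat.rfindOpt_dom.2 ⟨_, _, hwitness⟩
    obtain ⟨p', hp'⟩ : ∃ p', p' ∈ Nat.rfindOpt (hAux cU s) := ⟨_, Part.get_mem hdom⟩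
    obtain ⟨k', hk'⟩ := Nat.rfindOpt_spec hp'
    rcases Option.bind_eq_some_iff.1 hk' with ⟨q', hq', hk2⟩
    rcases Option.bind_eq_some_iff.1 hk2 with ⟨r, hr, hk3⟩
    rcases Option.bind_eq_some_iff.1 hk3 with ⟨p'', hp'', hk4⟩
    have hk5 : thr s < p''.length ∧ p'' = p' := by
      by_cases h : thr s < p''.length
      · refine ⟨h, ?_⟩; simpa [h] using hk4
      · simp [h] at hk4
    obtain ⟨hcond, hpp⟩ := hk5
    rw [hpp] at hp'' hcond
    have hrmem : r ∈ Nat.Partrec.Code.eval cU (Encodable.encode (t ++ q')) := by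
      have h := Nat.Partrec.Code.evaln_sound hr
      rwa [htOf] at h
    rw [hEval] at hrmem
    obtain ⟨x0, hx0, hx0e⟩ := (Part.mem_map_iff _).1 hrmem
    rw [← hx0e, Encodable.encodek] at hp''
    have hxp : x0 = p' := by injection hp''
    rw [hxp] at hx0
    obtain ⟨x, hx, hmin⟩ := hsound p' ⟨q', hx0⟩
    have hxF : x ∈ (Nat.rfindOpt (hAux cU s)).bind U := Part.mem_bind_iff.2 ⟨p', hp', hx⟩
    have hxU : x ∈ U (e ++ s) := by rw [he s]; exact hxF
    have h2 : (e ++ s).length = e.length + (m + 1 + t.length) := by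
      rw [List.length_append, hlen_s]
    rw [hthr] at hcond
    have hle : e.length + (m + 1 + t.length) ≤ t.length + m * m := by
      rw [hm]; nlinarith [sq_nonneg e.length]
    exact hmin (e ++ s) (by rw [h2]; exact lt_of_le_of_lt hle hcond) hxU
  refine ⟨hbound, ?_⟩
  apply Set.Finite.subset (List.finite_length_le Bool (t.length + m * m))
  intro p hp
  exact hbound p hp
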